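/- With λ(θ) the inverse of θ(λ) = -1 + Artanh(√(1-4λ))/√(1-4λ), and f(θ) = -log λ(θ) - 2θ - θ log(1-4λ(θ)), the identity λ(θ) = exp(-2θ - f(θ) + θ f'(θ)) holds for all θ > 0. -/

import Mathlib

open Real Filter Set

noncomputable def artanh (x : ℝ) : ℝ := (1/2) * Real.log ((1+x)/(1-x))

noncomputable def thetaF (l : ℝ) : ℝ := -1 + _root_.artanh (Real.sqrt (1-4*l)) / Real.sqrt (1-4*l)


lemma hasDerivAt_artanh {x : ℝ} (h1 : -1 < x) (h2 : x < 1) :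
    HasDerivAt _root_.artanh (1/(1-x^2)) x := by
  have key : HasDerivAt (fun y => (1/2) * (Real.log (1+y) - Real.log (1-y)))
      ((1/2) * (1/(1+x) - (-1)/(1-x))) x := by
    have ha : HasDerivAt (fun y : ℝ => 1 + y) 1 x := by
      simpa using (hasDerivAt_id x).const_add 1
    have hb : HasDerivAt (fun y : ℝ => 1 - y) (-1) x := by
      simpa using (hasDerivAt_id x).const_sub 1
    exact ((ha.log (by linarith)).sub (hb.log (by linarith))).const_mul (1/2)
  have heq : _root_.artanh =ᶠ[nhds x] (fun y => (1/2) * (Real.log (1+y) - Real.log (1-y))) := by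
    filter_upwards [Ioo_mem_nhds h1 h2] with y hy
    have hy1 : (0:ℝ) < 1 + y := by linarith [hy.1]
    have hy2 : (0:ℝ) < 1 - y := by linarith [hy.2]
    rw [_root_.artanh, Real.log_div hy1.ne' hy2.ne']
  have := key.congr_of_eventuallyEq heq
  refine this.congr_deriv ?_
  have hx1 : (1:ℝ)+x ≠ 0 := by linarith
  have hx2 : (1:ℝ)-x ≠ 0 := by linarith
  have hx3 : (1:ℝ)-x^2 ≠ 0 := by nlinarith [sq_nonneg x]
  field_simp
  ring

lemma artanh_zero : _root_.artanh 0 = 0 := by norm_num [_root_.artanh]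

lemma artanh_cont : ContinuousOn _root_.artanh (Ico 0 1) := fun x hx =>
  (_root_.hasDerivAt_artanh (by linarith [hx.1]) hx.2).continuousAt.continuousWithinAt

lemma lt_artanh {s : ℝ} (h0 : 0 < s) (h1 : s < 1) : s < _root_.artanh s := by
  have mono : StrictMonoOn (fun t => _root_.artanh t - t) (Ico 0 1) := by
    apply strictMonoOn_of_deriv_pos (convex_Ico 0 1)
      (_root_.artanh_cont.sub (by fun_prop))
    intro x hx
    rw [interior_Ico] at hx
    have hd : HasDerivAt (fun t => _root_.artanh t - t) (1/(1-x^2) - 1) x :=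
      (_root_.hasDerivAt_artanh (by linarith [hx.1]) hx.2).sub (hasDerivAt_id x)
    rw [show (_root_.artanh - fun t : ℝ => t) = (fun t => _root_.artanh t - t) from rfl, hd.deriv]
    have h3 : (0:ℝ) < 1 - x^2 := by nlinarith [hx.1, hx.2]
    have h4 : 1 - x^2 < 1 := by nlinarith [hx.1]
    linarith [(one_lt_div h3).mpr h4]
  have := mono (left_mem_Ico.mpr one_pos) ⟨h0.le, h1⟩ h0
  simp [_root_.artanh_zero] at this
  linarith

lemma artanh_lt {s : ℝ} (h0 : 0 < s) (h1 : s < 1) : _root_.artanh s < s / (1 - s^2) := by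
  have mono : StrictMonoOn (fun t => t / (1 - t^2) - _root_.artanh t) (Ico 0 1) := by
    apply strictMonoOn_of_deriv_pos (convex_Ico 0 1)
    · apply ContinuousOn.sub _ _root_.artanh_cont
      apply ContinuousOn.div continuousOn_id (by fun_prop)
      intro x hx; nlinarith [hx.1, hx.2]
    intro x hx
    rw [interior_Ico] at hx
    have h3 : (0:ℝ) < 1 - x^2 := by nlinarith [hx.1, hx.2]
    have hq : HasDerivAt (fun t : ℝ => 1 - t^2) (-(2*x)) x := by
      simpa using (hasDerivAt_pow 2 x).const_sub 1
    have hd : HasDerivAt (fun t => t / (1 - t^2) - _root_.artanh t)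
        ((1*(1-x^2) - x*(-(2*x)))/(1-x^2)^2 - 1/(1-x^2)) x :=
      ((hasDerivAt_id x).div hq h3.ne').sub
        (_root_.hasDerivAt_artanh (by linarith [hx.1]) hx.2)
    rw [hd.deriv]
    have : (1*(1-x^2) - x*(-(2*x)))/(1-x^2)^2 - 1/(1-x^2) = 2*x^2/(1-x^2)^2 := by
      field_simp; ring
    rw [this]
    exact div_pos (by nlinarith [hx.1]) (by positivity)
  have := mono (left_mem_Ico.mpr one_pos) ⟨h0.le, h1⟩ h0
  simp [_root_.artanh_zero] at this
  linarith


lemma thetaF_hasDerivAt {l : ℝ} (hl : l ∈ Ioo (0:ℝ) (1/4)) :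
    HasDerivAt thetaF ((4*l*(thetaF l)+4*l-1)/(2*l*(1-4*l))) l := by
  obtain ⟨hl0, hl4⟩ := hl
  set s := Real.sqrt (1-4*l) with hs
  have hu : (0:ℝ) < 1 - 4*l := by linarith
  have hu1 : 1 - 4*l < 1 := by linarith
  have hs0 : 0 < s := Real.sqrt_pos.mpr hu
  have hs1 : s < 1 := by
    have := Real.sqrt_lt_sqrt hu.le hu1
    simpa [hs] using this
  have hs2 : s^2 = 1 - 4*l := Real.sq_sqrt hu.le
  have H1 : HasDerivAt (fun x : ℝ => 1 - 4*x) (-4) l := by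
    simpa using ((hasDerivAt_id l).const_mul 4).const_sub 1
  have Hs : HasDerivAt (fun x : ℝ => Real.sqrt (1-4*x)) (-4 / (2*s)) l := H1.sqrt hu.ne'
  have Hart : HasDerivAt (fun x : ℝ => _root_.artanh (Real.sqrt (1-4*x)))
      ((1/(1-s^2)) * (-4/(2*s))) l :=
    (_root_.hasDerivAt_artanh (by linarith) hs1).comp (h₂ := _root_.artanh) l Hs
  have Hdiv : HasDerivAt (fun x : ℝ => _root_.artanh (Real.sqrt (1-4*x)) / Real.sqrt (1-4*x))
      (((1/(1-s^2)) * (-4/(2*s)) * s - _root_.artanh s * (-4/(2*s))) / s^2) l :=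
    Hart.div Hs hs0.ne'
  have Hfin : HasDerivAt thetaF
      (((1/(1-s^2)) * (-4/(2*s)) * s - _root_.artanh s * (-4/(2*s))) / s^2) l :=
    Hdiv.const_add (-1)
  have hA : _root_.artanh s = s * (thetaF l + 1) := by
    have h : thetaF l = -1 + _root_.artanh s / s := rfl
    rw [h]; field_simp; ring
  clear_value s
  convert Hfin using 1
  rw [hA, hs2]
  field_simp
  ring

lemma num_neg {l : ℝ} (hl : l ∈ Ioo (0:ℝ) (1/4)) : 4*l*(thetaF l)+4*l-1 < 0 := by
  obtain ⟨hl0, hl4⟩ := hl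
  set s := Real.sqrt (1-4*l) with hs
  have hu : (0:ℝ) < 1 - 4*l := by linarith
  have hu1 : 1 - 4*l < 1 := by linarith
  have hs0 : 0 < s := Real.sqrt_pos.mpr hu
  have hs1 : s < 1 := by
    have := Real.sqrt_lt_sqrt hu.le hu1
    simpa [hs] using this
  have hs2 : s^2 = 1 - 4*l := Real.sq_sqrt hu.le
  have hA : _root_.artanh s = s * (thetaF l + 1) := by
    have h : thetaF l = -1 + _root_.artanh s / s := rfl
    rw [h]; field_simp; ring
  have hlt := _root_.artanh_lt hs0 hs1
  rw [hA, hs2] at hlt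
  -- s*(θ+1) < s/(4l)
  have h4l : (0:ℝ) < 4*l := by linarith
  have hlt' : s * (thetaF l + 1) < s * (1/(4*l)) := by
    rw [mul_one_div]
    convert hlt using 2
    ring
  have h2 : thetaF l + 1 < 1/(4*l) := (mul_lt_mul_iff_right₀ hs0).mp hlt'
  have h3 := (lt_div_iff₀ h4l).mp h2
  nlinarith [h3]

lemma thetaF_deriv_neg {l : ℝ} (hl : l ∈ Ioo (0:ℝ) (1/4)) :
    (4*l*(thetaF l)+4*l-1)/(2*l*(1-4*l)) < 0 :=
  div_neg_of_neg_of_pos (num_neg hl) (by nlinarith [hl.1, hl.2])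

lemma thetaF_anti : StrictAntiOn thetaF (Ioo (0:ℝ) (1/4)) := by
  apply strictAntiOn_of_deriv_neg (convex_Ioo 0 (1/4))
    (fun l hl => (thetaF_hasDerivAt hl).continuousAt.continuousWithinAt)
  intro l hl
  rw [interior_Ioo] at hl
  rw [(thetaF_hasDerivAt hl).deriv]
  exact thetaF_deriv_neg hl

theorem stmt9 (lam : ℝ → ℝ)
    (hmem : ∀ θ > (0:ℝ), lam θ ∈ Set.Ioo (0:ℝ) (1/4))
    (hinv : ∀ θ > (0:ℝ), thetaF (lam θ) = θ)
    (f : ℝ → ℝ)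
    (hf : ∀ θ, f θ = -Real.log (lam θ) - 2*θ - θ * Real.log (1 - 4 * lam θ)) :
    ∀ θ > (0:ℝ), lam θ = Real.exp (-2*θ - f θ + θ * deriv f θ) := by
  intro θ hθ
  obtain ⟨hl0, hl4⟩ := hmem θ hθ
  have hu : (0:ℝ) < 1 - 4 * lam θ := by linarith
  -- continuity of lam at θ
  have hcont : ContinuousAt lam θ := by
    rw [ContinuousAt, (nhds_basis_Ioo_pos (lam θ)).tendsto_right_iff]
    intro ε hε
    set ε' := min ε (min (lam θ / 2) ((1/4 - lam θ)/2)) with hε'def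
    have hε' : 0 < ε' := by
      apply lt_min hε (lt_min (by linarith) (by linarith))
    have hε'le : ε' ≤ ε := min_le_left _ _
    have hε'2 : ε' ≤ lam θ / 2 := le_trans (min_le_right _ _) (min_le_left _ _)
    have hε'3 : ε' ≤ (1/4 - lam θ)/2 := le_trans (min_le_right _ _) (min_le_right _ _)
    have hm1 : lam θ - ε' ∈ Ioo (0:ℝ) (1/4) := ⟨by linarith, by linarith⟩
    have hm2 : lam θ + ε' ∈ Ioo (0:ℝ) (1/4) := ⟨by linarith, by linarith⟩
    have hmθ : lam θ ∈ Ioo (0:ℝ) (1/4) := ⟨hl0, hl4⟩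
    have hθp : thetaF (lam θ - ε') > θ := by
      have := thetaF_anti hm1 hmθ (by linarith)
      rwa [hinv θ hθ] at this
    have hθm : thetaF (lam θ + ε') < θ := by
      have := thetaF_anti hmθ hm2 (by linarith)
      rwa [hinv θ hθ] at this
    have hlo : max (thetaF (lam θ + ε')) (θ/2) < θ := max_lt hθm (by linarith)
    filter_upwards [Ioo_mem_nhds hlo hθp] with x hx
    have hx0 : 0 < x := by
      have := lt_of_le_of_lt (le_max_right (thetaF (lam θ + ε')) (θ/2)) hx.1
      linarith
    have hxm := hmem x hx0
    have hlow : lam θ - ε' < lam x := by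
      by_contra h
      push_neg at h
      have h2 := (thetaF_anti.le_iff_ge hm1 hxm).mpr h
      rw [hinv x hx0] at h2
      have := hx.2
      linarith
    have hhigh : lam x < lam θ + ε' := by
      by_contra h
      push_neg at h
      have h2 := (thetaF_anti.le_iff_ge hxm hm2).mpr h
      rw [hinv x hx0] at h2
      have := lt_of_le_of_lt (le_max_left _ _) hx.1
      linarith
    exact ⟨by linarith, by linarith⟩
  -- derivative of lam
  have hD : HasDerivAt thetaF
      ((4*lam θ*θ + 4*lam θ - 1)/(2*lam θ*(1 - 4*lam θ))) (lam θ) := by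
    have := thetaF_hasDerivAt ⟨hl0, hl4⟩
    rwa [hinv θ hθ] at this
  have hNneg : 4*lam θ*θ + 4*lam θ - 1 < 0 := by
    have := num_neg ⟨hl0, hl4⟩
    rwa [hinv θ hθ] at this
  have hDne : (4*lam θ*θ + 4*lam θ - 1)/(2*lam θ*(1 - 4*lam θ)) ≠ 0 :=
    (div_neg_of_neg_of_pos hNneg (by nlinarith)).ne
  have Hlam : HasDerivAt lam
      ((4*lam θ*θ + 4*lam θ - 1)/(2*lam θ*(1 - 4*lam θ)))⁻¹ θ := by
    apply HasDerivAt.of_local_left_inverse hcont hD hDne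
    filter_upwards [Ioi_mem_nhds hθ] with y hy
    exact hinv y hy
  set L := ((4*lam θ*θ + 4*lam θ - 1)/(2*lam θ*(1 - 4*lam θ)))⁻¹ with hL
  -- derivative of f
  have h1 : HasDerivAt (fun t => Real.log (lam t)) (L / lam θ) θ := Hlam.log hl0.ne'
  have h2 : HasDerivAt (fun t : ℝ => 2*t) 2 θ := by
    simpa using (hasDerivAt_id θ).const_mul 2
  have h3 : HasDerivAt (fun t => 1 - 4*lam t) (-(4*L)) θ := by
    simpa using (Hlam.const_mul 4).const_sub 1
  have h4 : HasDerivAt (fun t => Real.log (1 - 4*lam t)) ((-(4*L))/(1 - 4*lam θ)) θ :=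
    h3.log hu.ne'
  have h5 : HasDerivAt (fun t => t * Real.log (1 - 4*lam t))
      (1 * Real.log (1 - 4*lam θ) + θ * ((-(4*L))/(1 - 4*lam θ))) θ :=
    (hasDerivAt_id θ).mul h4
  have hfe : f = fun t => -Real.log (lam t) - 2*t - t * Real.log (1 - 4*lam t) := by
    funext t
    rw [hf t]
  have Hf : HasDerivAt f
      (-(L / lam θ) - 2 - (1 * Real.log (1 - 4*lam θ) + θ * ((-(4*L))/(1 - 4*lam θ)))) θ := by
    rw [hfe]
    exact ((h1.neg).sub h2).sub h5
  have key : deriv f θ = -Real.log (1 - 4*lam θ) := by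
    rw [Hf.deriv, hL]
    have hlne : lam θ ≠ 0 := hl0.ne'
    have hune : 1 - 4*lam θ ≠ 0 := hu.ne'
    have hNne : 4*lam θ*θ + 4*lam θ - 1 ≠ 0 := hNneg.ne
    have hNne' : 4 * lam θ * (θ + 1) - 1 ≠ 0 := by intro h; apply hNne; linarith
    field_simp
    ring
  rw [key, hf θ]
  have hring : -2*θ - (-Real.log (lam θ) - 2*θ - θ * Real.log (1 - 4*lam θ))
      + θ * -Real.log (1 - 4*lam θ) = Real.log (lam θ) := by ring
  rw [hring, Real.exp_log hl0]
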